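/- For every z in the unitary group U(n) and all indices 1 ≤ j, k, α, β ≤ n one has Σ_{Z∈B} (z·Z·Z)_{jα} = −n·z_{jα} and Σ_{Z∈B} (z·Z)_{jα}·(z·Z)_{kβ} = −z_{kα}·z_{jβ}. Equivalently, the matrix-coefficient functions z_{jα} of the standard representation of U(n) satisfy τ(z_{jα}) = −n·z_{jα} and κ(z_{jα}, z_{kβ}) = −z_{kα}·z_{jβ}. -/

import Mathlib

/-- The matrix `E_rs` with `(r,s)`-entry `1` and all other entries `0`. -/
noncomputable def EE (n : ℕ) (r s : Fin n) : Matrix (Fin n) (Fin n) ℂ :=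
  Matrix.single r s 1

/-- `X_rs = (E_rs + E_sr)/√2`. -/
noncomputable def XX (n : ℕ) (r s : Fin n) : Matrix (Fin n) (Fin n) ℂ :=
  (Real.sqrt 2 : ℂ)⁻¹ • (EE n r s + EE n s r)

/-- `Y_rs = (E_rs - E_sr)/√2`. -/
noncomputable def YY (n : ℕ) (r s : Fin n) : Matrix (Fin n) (Fin n) ℂ :=
  (Real.sqrt 2 : ℂ)⁻¹ • (EE n r s - EE n s r)

/-- `D_r = E_rr`. -/
noncomputable def DD (n : ℕ) (r : Fin n) : Matrix (Fin n) (Fin n) ℂ :=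
  Matrix.single r r 1

/-- The Laplace–Beltrami operator `τ(F)(z) = Σ_{Z ∈ B} F(z·Z·Z)` of the bi-invariant
metric on `U(n)`, where `B = {iX_rs, Y_rs (r<s), iD_r}` is the canonical orthonormal
basis of `u(n)`. -/
noncomputable def tauU (n : ℕ) (F : Matrix (Fin n) (Fin n) ℂ → ℂ)
    (z : Matrix (Fin n) (Fin n) ℂ) : ℂ :=
  (∑ r : Fin n, ∑ s : Fin n, if r < s then
      F (z * (Complex.I • XX n r s) * (Complex.I • XX n r s))
        + F (z * YY n r s * YY n r s)
    else 0)
  + ∑ r : Fin n, F (z * (Complex.I • DD n r) * (Complex.I • DD n r))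

/-- The conformality operator `κ(F,G)(z) = Σ_{Z ∈ B} F(z·Z)·G(z·Z)` on `U(n)`. -/
noncomputable def kappaU (n : ℕ) (F G : Matrix (Fin n) (Fin n) ℂ → ℂ)
    (z : Matrix (Fin n) (Fin n) ℂ) : ℂ :=
  (∑ r : Fin n, ∑ s : Fin n, if r < s then
      F (z * (Complex.I • XX n r s)) * G (z * (Complex.I • XX n r s))
        + F (z * YY n r s) * G (z * YY n r s)
    else 0)
  + ∑ r : Fin n, F (z * (Complex.I • DD n r)) * G (z * (Complex.I • DD n r))

/- ### Auxiliary lemmas -/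

lemma uGrp_sq2 : ((Real.sqrt 2 : ℂ)⁻¹) * ((Real.sqrt 2 : ℂ)⁻¹) = (2:ℂ)⁻¹ := by
  rw [← mul_inv, ← Complex.ofReal_mul, Real.mul_self_sqrt (by norm_num)]
  norm_num

lemma uGrp_Emul {n : ℕ} (r s t u : Fin n) :
    EE n r s * EE n t u = if s = t then EE n r u else 0 := by
  unfold EE
  split
  · subst ‹s = t›; rw [Matrix.single_mul_single_same]; norm_num
  · rw [Matrix.single_mul_single_of_ne (h := ‹s ≠ t›)]

lemma uGrp_Xsq {n : ℕ} {r s : Fin n} (h : r ≠ s) :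
    (Complex.I • XX n r s) * (Complex.I • XX n r s)
      = -((2:ℂ)⁻¹ • (EE n r r + EE n s s)) := by
  simp only [XX, smul_smul, Matrix.smul_mul, Matrix.mul_smul, add_mul, mul_add, uGrp_Emul,
    if_pos rfl, if_neg h, if_neg h.symm, if_true, zero_add, add_zero, smul_add, smul_smul]
  have : Complex.I * (Real.sqrt 2 : ℂ)⁻¹ * (Complex.I * (Real.sqrt 2 : ℂ)⁻¹) = -(2:ℂ)⁻¹ := by
    rw [mul_mul_mul_comm, Complex.I_mul_I, uGrp_sq2]; ring
  rw [this]; module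

lemma uGrp_Ysq {n : ℕ} {r s : Fin n} (h : r ≠ s) :
    YY n r s * YY n r s = -((2:ℂ)⁻¹ • (EE n r r + EE n s s)) := by
  simp only [YY, Matrix.smul_mul, Matrix.mul_smul, sub_mul, mul_sub, uGrp_Emul,
    if_pos rfl, if_neg h, if_neg h.symm, if_true, zero_sub, sub_zero, smul_sub, smul_neg,
    smul_smul, uGrp_sq2]
  module

lemma uGrp_Dsq {n : ℕ} (r : Fin n) :
    (Complex.I • DD n r) * (Complex.I • DD n r) = -(EE n r r) := by
  show (Complex.I • EE n r r) * (Complex.I • EE n r r) = _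
  simp only [Matrix.smul_mul, Matrix.mul_smul, uGrp_Emul, if_pos rfl, smul_smul,
    Complex.I_mul_I, if_true, neg_smul, one_smul]

lemma uGrp_mulE {n : ℕ} (z : Matrix (Fin n) (Fin n) ℂ) (r s j α : Fin n) :
    (z * EE n r s) j α = if s = α then z j r else 0 := by
  simp only [EE, Matrix.mul_apply, Matrix.single, Matrix.of_apply, ite_and, mul_ite,
    mul_one, mul_zero]
  rw [Finset.sum_ite_eq]
  simp

lemma uGrp_mulX {n : ℕ} (z : Matrix (Fin n) (Fin n) ℂ) (r s j α : Fin n) :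
    (z * (Complex.I • XX n r s)) j α
      = Complex.I * (Real.sqrt 2 : ℂ)⁻¹
          * ((if s = α then z j r else 0) + (if r = α then z j s else 0)) := by
  rw [Matrix.mul_smul, XX, Matrix.mul_smul, Matrix.mul_add]
  simp only [Matrix.smul_apply, Matrix.add_apply, uGrp_mulE, smul_eq_mul]
  ring

lemma uGrp_mulY {n : ℕ} (z : Matrix (Fin n) (Fin n) ℂ) (r s j α : Fin n) :
    (z * YY n r s) j α
      = (Real.sqrt 2 : ℂ)⁻¹
          * ((if s = α then z j r else 0) - (if r = α then z j s else 0)) := by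
  rw [YY, Matrix.mul_smul, Matrix.mul_sub]
  simp only [Matrix.smul_apply, Matrix.sub_apply, uGrp_mulE, smul_eq_mul]

lemma uGrp_mulD {n : ℕ} (z : Matrix (Fin n) (Fin n) ℂ) (r j α : Fin n) :
    (z * (Complex.I • DD n r)) j α = Complex.I * (if r = α then z j r else 0) := by
  show (z * (Complex.I • EE n r r)) j α = _
  rw [Matrix.mul_smul]
  simp only [Matrix.smul_apply, uGrp_mulE, smul_eq_mul]

lemma uGrp_key (a b a' b' : ℂ) :
    (Complex.I * (Real.sqrt 2 : ℂ)⁻¹ * (a + b)) * (Complex.I * (Real.sqrt 2 : ℂ)⁻¹ * (a' + b'))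
      + ((Real.sqrt 2 : ℂ)⁻¹ * (a - b)) * ((Real.sqrt 2 : ℂ)⁻¹ * (a' - b'))
      = -(a * b' + b * a') := by
  have h1 : Complex.I * Complex.I = -1 := Complex.I_mul_I
  have h2 := uGrp_sq2
  linear_combination ((Real.sqrt 2 : ℂ)⁻¹ * (Real.sqrt 2 : ℂ)⁻¹ * (a + b) * (a' + b')) * h1
    + ((a - b) * (a' - b') - (a + b) * (a' + b')) * h2

lemma uGrp_sumLT1 {n : ℕ} (α : Fin n) (c : ℂ) :
    (∑ r : Fin n, ∑ s : Fin n, if r < s then (if r = α then c else 0) else 0)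
      = (n - 1 - (α : ℕ)) • c := by
  have h : ∀ r s : Fin n, (if r < s then (if r = α then c else 0) else 0)
      = if r = α then (if r < s then c else 0) else 0 := by
    intro r s; split_ifs <;> rfl
  simp_rw [h]
  have h2 : ∀ r : Fin n, (∑ s : Fin n, if r = α then (if r < s then c else 0) else 0)
      = if r = α then (∑ s : Fin n, if r < s then c else 0) else 0 := by
    intro r; split_ifs <;> simp
  simp_rw [h2, Finset.sum_ite_eq', Finset.mem_univ, if_true]
  rw [Finset.sum_ite, Finset.sum_const, Finset.sum_const_zero, add_zero,
    Finset.filter_lt_eq_Ioi, Fin.card_Ioi]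

lemma uGrp_sumLT2 {n : ℕ} (α : Fin n) (c : ℂ) :
    (∑ r : Fin n, ∑ s : Fin n, if r < s then (if s = α then c else 0) else 0)
      = ((α : ℕ)) • c := by
  have h : ∀ r s : Fin n, (if r < s then (if s = α then c else 0) else 0)
      = if s = α then (if r < s then c else 0) else 0 := by
    intro r s; split_ifs <;> rfl
  simp_rw [h, Finset.sum_ite_eq', Finset.mem_univ, if_true]
  rw [Finset.sum_ite, Finset.sum_const, Finset.sum_const_zero, add_zero,
    Finset.filter_gt_eq_Iio, Fin.card_Iio]

lemma uGrp_sumPair {n : ℕ} (γ δ : Fin n) (P : ℂ) :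
    (∑ r : Fin n, ∑ s : Fin n, if r < s then (if r = γ ∧ s = δ then P else 0) else 0)
      = if γ < δ then P else 0 := by
  have h : ∀ r s : Fin n, (if r < s then (if r = γ ∧ s = δ then P else 0) else 0)
      = if s = δ then (if r = γ then (if r < s then P else 0) else 0) else 0 := by
    intro r s; split_ifs <;> simp_all
  simp_rw [h, Finset.sum_ite_eq', Finset.mem_univ, if_true]
  rw [Finset.sum_ite_eq']
  simp

/-- The matrix coefficients `z_{jα}` of the standard representation of `U(n)`
satisfy `τ(z_{jα}) = -n·z_{jα}` and `κ(z_{jα}, z_{kβ}) = -z_{kα}·z_{jβ}`. -/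
theorem stmt_0 (n : ℕ) (hn : 0 < n) (z : Matrix (Fin n) (Fin n) ℂ)
    (hz : z ∈ Matrix.unitaryGroup (Fin n) ℂ) (j k α β : Fin n) :
    tauU n (fun w => w j α) z = -(n : ℂ) * z j α ∧
    kappaU n (fun w => w j α) (fun w => w k β) z = -(z k α * z j β) := by
  constructor
  · -- τ
    unfold tauU
    have hterm : ∀ r s : Fin n, r < s →
        (z * (Complex.I • XX n r s) * (Complex.I • XX n r s)) j α
          + (z * YY n r s * YY n r s) j α
        = (if r = α then -z j α else 0) + (if s = α then -z j α else 0) := by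
      intro r s hrs
      rw [mul_assoc, uGrp_Xsq (ne_of_lt hrs), mul_assoc, uGrp_Ysq (ne_of_lt hrs)]
      simp only [Matrix.mul_neg, Matrix.mul_smul, Matrix.mul_add, Matrix.neg_apply,
        Matrix.smul_apply, Matrix.add_apply, uGrp_mulE, smul_eq_mul]
      split_ifs <;> subst_vars <;> ring
    have hcongr : (∑ r : Fin n, ∑ s : Fin n, if r < s then
          (z * (Complex.I • XX n r s) * (Complex.I • XX n r s)) j α
            + (z * YY n r s * YY n r s) j α else 0)
        = ∑ r : Fin n, ∑ s : Fin n, if r < s then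
            ((if r = α then -z j α else 0) + (if s = α then -z j α else 0)) else 0 := by
      refine Finset.sum_congr rfl fun r _ => Finset.sum_congr rfl fun s _ => ?_
      by_cases hrs : r < s
      · rw [if_pos hrs, if_pos hrs, hterm r s hrs]
      · rw [if_neg hrs, if_neg hrs]
    rw [hcongr]
    have hsplit : ∀ r s : Fin n, (if r < s then
          ((if r = α then -z j α else 0) + (if s = α then -z j α else 0)) else 0)
        = (if r < s then (if r = α then -z j α else 0) else 0)
            + (if r < s then (if s = α then -z j α else 0) else 0) := by
      intro r s; split_ifs <;> simp
    simp_rw [hsplit, Finset.sum_add_distrib]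
    rw [uGrp_sumLT1, uGrp_sumLT2]
    have hdiag : ∀ r : Fin n,
        (z * (Complex.I • DD n r) * (Complex.I • DD n r)) j α
          = if r = α then -z j α else 0 := by
      intro r
      rw [mul_assoc, uGrp_Dsq]
      simp only [Matrix.mul_neg, Matrix.neg_apply, uGrp_mulE]
      split_ifs <;> subst_vars <;> simp
    simp_rw [hdiag]
    simp only [Finset.sum_ite_eq', Finset.mem_univ, if_true]
    have hα : (α : ℕ) ≤ n - 1 := Nat.le_sub_one_of_lt α.isLt
    rw [nsmul_eq_mul, nsmul_eq_mul, Nat.cast_sub hα, Nat.cast_sub hn]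
    push_cast
    ring
  · -- κ
    unfold kappaU
    have hterm : ∀ r s : Fin n, r < s →
        (z * (Complex.I • XX n r s)) j α * (z * (Complex.I • XX n r s)) k β
          + (z * YY n r s) j α * (z * YY n r s) k β
        = (if r = β ∧ s = α then -(z j β * z k α) else 0)
            + (if r = α ∧ s = β then -(z j β * z k α) else 0) := by
      intro r s hrs
      rw [uGrp_mulX, uGrp_mulX, uGrp_mulY, uGrp_mulY, uGrp_key]
      have e1 : (if s = α then z j r else 0) * (if r = β then z k s else 0)
          = (if r = β ∧ s = α then z j β * z k α else 0) := by
        rcases eq_or_ne s α with h | h <;> rcases eq_or_ne r β with h' | h' <;>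
          simp [h, h']
      have e2 : (if r = α then z j s else 0) * (if s = β then z k r else 0)
          = (if r = α ∧ s = β then z j β * z k α else 0) := by
        rcases eq_or_ne r α with h | h <;> rcases eq_or_ne s β with h' | h' <;>
          simp [h, h']
      rw [e1, e2]
      split_ifs <;> ring
    have hcongr : (∑ r : Fin n, ∑ s : Fin n, if r < s then
          (z * (Complex.I • XX n r s)) j α * (z * (Complex.I • XX n r s)) k β
            + (z * YY n r s) j α * (z * YY n r s) k β else 0)
        = ∑ r : Fin n, ∑ s : Fin n, if r < s then
            ((if r = β ∧ s = α then -(z j β * z k α) else 0)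
              + (if r = α ∧ s = β then -(z j β * z k α) else 0)) else 0 := by
      refine Finset.sum_congr rfl fun r _ => Finset.sum_congr rfl fun s _ => ?_
      by_cases hrs : r < s
      · rw [if_pos hrs, if_pos hrs, hterm r s hrs]
      · rw [if_neg hrs, if_neg hrs]
    rw [hcongr]
    have hsplit : ∀ r s : Fin n, (if r < s then
          ((if r = β ∧ s = α then -(z j β * z k α) else 0)
            + (if r = α ∧ s = β then -(z j β * z k α) else 0)) else 0)
        = (if r < s then (if r = β ∧ s = α then -(z j β * z k α) else 0) else 0)
            + (if r < s then (if r = α ∧ s = β then -(z j β * z k α) else 0) else 0) := by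
      intro r s; split_ifs <;> simp
    simp_rw [hsplit, Finset.sum_add_distrib]
    rw [uGrp_sumPair, uGrp_sumPair]
    have hdiag : ∀ r : Fin n,
        (z * (Complex.I • DD n r)) j α * (z * (Complex.I • DD n r)) k β
          = if r = α then (if r = β then -(z j α * z k β) else 0) else 0 := by
      intro r
      have hI : ∀ u v : ℂ, Complex.I * u * (Complex.I * v) = -(u * v) := fun u v => by
        linear_combination u * v * Complex.I_mul_I
      rw [uGrp_mulD, uGrp_mulD, hI]
      split_ifs <;> subst_vars <;> simp
    simp_rw [hdiag]
    simp only [Finset.sum_ite_eq', Finset.mem_univ, if_true]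
    rcases lt_trichotomy α β with h | h | h
    · rw [if_neg (lt_asymm h), if_pos h, if_neg (ne_of_lt h)]
      ring
    · subst h
      simp [mul_comm]
    · rw [if_pos h, if_neg (lt_asymm h), if_neg (ne_of_gt h)]
      ring
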